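/- For every j ∈ {0,…,r} and every n ∈ ℤ there exists a finite constant l⁺_{j,n} > 0, depending only on β, γ, l⁺ and L, such that every strictly positive density f on ℝ for which ln f is r times differentiable, |(ln f)^{(r)}(x) − (ln f)^{(r)}(y)| ≤ r! L(x) |y − x|^{β−r} whenever |y − x| ≤ γ, and |(ln f)^{(j')}(0)| ≤ l⁺ for all j' = 0,…,r, satisfies sup_{y ∈ [nγ, (n+1)γ]} |(ln f)^{(j)}(y)| ≤ l⁺_{j,n}. -/
import Mathlib

set_option maxHeartbeats 1000000


open MeasureTheory

/-- The largest integer strictly smaller than `β` (for `β > 0`). -/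
noncomputable def rOf (β : ℝ) : ℕ := ⌈β⌉₊ - 1

/-- Lemma 11: uniform bounds on the derivatives of `ln f` on the intervals
`[nγ, (n+1)γ]`, depending only on `β, γ, l⁺, L`, over all strictly positive densities `f`
satisfying the smoothness conditions. -/
theorem stmt14 (β : ℝ) (hβ : 0 < β) (γ lp : ℝ) (hγ : 0 < γ) (hlp : 0 < lp)
    (L : Polynomial ℝ) :
    ∀ j ≤ rOf β, ∀ n : ℤ, ∃ b : ℝ, 0 < b ∧
      ∀ f : ℝ → ℝ, (∀ x, 0 < f x) → Integrable f → (∫ x, f x) = 1 →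
        (∀ i < rOf β, Differentiable ℝ (iteratedDeriv i fun x => Real.log (f x))) →
        (∀ x y : ℝ, |y - x| ≤ γ →
          |iteratedDeriv (rOf β) (fun z => Real.log (f z)) x -
            iteratedDeriv (rOf β) (fun z => Real.log (f z)) y| ≤
              (Nat.factorial (rOf β) : ℝ) * L.eval x * |y - x| ^ (β - (rOf β : ℝ))) →
        (∀ j' ≤ rOf β, |iteratedDeriv j' (fun z => Real.log (f z)) 0| ≤ lp) →
        ∀ y ∈ Set.Icc ((n : ℝ) * γ) (((n : ℝ) + 1) * γ),
          |iteratedDeriv j (fun z => Real.log (f z)) y| ≤ b := by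
  intro j hj n
  set r := rOf β with hr_def
  -- basic facts about r and β
  have hceil1 : 1 ≤ ⌈β⌉₊ := Nat.one_le_ceil_iff.mpr hβ
  have hrcast : (r : ℝ) = (⌈β⌉₊ : ℝ) - 1 := by
    rw [hr_def, rOf]
    push_cast [hceil1]
    ring
  have hrβ : (r : ℝ) < β := by
    have h1 : (⌈β⌉₊ : ℝ) < β + 1 := Nat.ceil_lt_add_one hβ.le
    rw [hrcast]; linarith
  have he : 0 < β - (r : ℝ) := by linarith
  set e := β - (r : ℝ) with he_def
  set A : ℕ := n.natAbs + 1 with hA_def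
  have hA0 : 0 < (A : ℝ) := by positivity
  -- bound on the polynomial on the compact interval
  obtain ⟨C, hC⟩ := (isCompact_Icc (a := -((A : ℝ) * γ)) (b := (A : ℝ) * γ)).exists_bound_of_continuousOn
    (L.continuous.continuousOn)
  set S : ℝ := max C 0 with hS_def
  have hS0 : 0 ≤ S := le_max_right _ _
  have hLS : ∀ x ∈ Set.Icc (-((A : ℝ) * γ)) ((A : ℝ) * γ), |L.eval x| ≤ S := by
    intro x hx
    have := hC x hx
    rw [Real.norm_eq_abs] at this
    exact le_trans this (le_max_left _ _)
  have hγe : 0 < γ ^ e := Real.rpow_pos_of_pos hγ e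
  set Br : ℝ := lp + (A : ℝ) * ((r.factorial : ℝ) * S * γ ^ e) with hBr_def
  have hBr0 : 0 < Br := by
    have : 0 ≤ (A : ℝ) * ((r.factorial : ℝ) * S * γ ^ e) := by positivity
    linarith
  -- bound on the top derivative
  have key_r : ∀ f : ℝ → ℝ,
      (∀ x y : ℝ, |y - x| ≤ γ →
        |iteratedDeriv r (fun z => Real.log (f z)) x -
          iteratedDeriv r (fun z => Real.log (f z)) y| ≤
            (Nat.factorial r : ℝ) * L.eval x * |y - x| ^ e) →
      (∀ j' ≤ r, |iteratedDeriv j' (fun z => Real.log (f z)) 0| ≤ lp) →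
      ∀ y : ℝ, |y| ≤ (A : ℝ) * γ →
        |iteratedDeriv r (fun z => Real.log (f z)) y| ≤ Br := by
    intro f hH hl0 y hy
    set G := iteratedDeriv r (fun z => Real.log (f z)) with hG_def
    set X : ℕ → ℝ := fun i => (i : ℝ) * y / A with hX_def
    have hXA : X A = y := by
      simp only [hX_def]
      field_simp
    have hX0 : X 0 = 0 := by simp [hX_def]
    have hstepY : ∀ i : ℕ, X (i + 1) - X i = y / A := by
      intro i
      simp only [hX_def]
      push_cast
      ring
    have hstep_le : |y / A| ≤ γ := by
      rw [abs_div, abs_of_pos hA0, div_le_iff₀ hA0]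
      nlinarith
    have step : ∀ i ∈ Finset.range A,
        |G (X (i + 1)) - G (X i)| ≤ (r.factorial : ℝ) * S * γ ^ e := by
      intro i hi
      have hiA : (i : ℝ) ≤ (A : ℝ) := by
        exact_mod_cast (Finset.mem_range.mp hi).le
      have hXi_abs : |X i| ≤ (A : ℝ) * γ := by
        have h1 : |X i| = (i : ℝ) * |y| / A := by
          rw [hX_def]
          rw [abs_div, abs_mul, abs_of_nonneg (by positivity : (0:ℝ) ≤ (i : ℝ)),
            abs_of_pos hA0]
        rw [h1]
        have h2 : (i : ℝ) * |y| / A ≤ |y| := by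
          rw [div_le_iff₀ hA0]
          nlinarith [abs_nonneg y]
        linarith
      have hXmem : X i ∈ Set.Icc (-((A : ℝ) * γ)) ((A : ℝ) * γ) := by
        rw [Set.mem_Icc, ← abs_le]
        exact hXi_abs
      have h := hH (X i) (X (i + 1)) (by rw [hstepY]; exact hstep_le)
      rw [hstepY] at h
      have hLx : L.eval (X i) ≤ S := le_trans (le_abs_self _) (hLS _ hXmem)
      calc |G (X (i + 1)) - G (X i)| = |G (X i) - G (X (i + 1))| := abs_sub_comm _ _
        _ ≤ (r.factorial : ℝ) * L.eval (X i) * |y / A| ^ e := h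
        _ ≤ (r.factorial : ℝ) * S * |y / A| ^ e := by
            apply mul_le_mul_of_nonneg_right _ (Real.rpow_nonneg (abs_nonneg _) e)
            exact mul_le_mul_of_nonneg_left hLx (by positivity)
        _ ≤ (r.factorial : ℝ) * S * γ ^ e := by
            apply mul_le_mul_of_nonneg_left
              (Real.rpow_le_rpow (abs_nonneg _) hstep_le he.le) (by positivity)
    have htel : ∑ i ∈ Finset.range A, (G (X (i + 1)) - G (X i)) = G (X A) - G (X 0) :=
      Finset.sum_range_sub (fun i => G (X i)) A
    have hGy : |G y - G 0| ≤ (A : ℝ) * ((r.factorial : ℝ) * S * γ ^ e) := by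
      rw [← hXA, ← hX0, ← htel]
      calc |∑ i ∈ Finset.range A, (G (X (i + 1)) - G (X i))|
          ≤ ∑ i ∈ Finset.range A, |G (X (i + 1)) - G (X i)| :=
            Finset.abs_sum_le_sum_abs _ _
        _ ≤ ∑ _i ∈ Finset.range A, ((r.factorial : ℝ) * S * γ ^ e) :=
            Finset.sum_le_sum step
        _ = (A : ℝ) * ((r.factorial : ℝ) * S * γ ^ e) := by
            rw [Finset.sum_const, Finset.card_range, nsmul_eq_mul]
    have h0 : |G 0| ≤ lp := hl0 r le_rfl
    calc |G y| = |(G y - G 0) + G 0| := by ring_nf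
      _ ≤ |G y - G 0| + |G 0| := abs_add_le _ _
      _ ≤ (A : ℝ) * ((r.factorial : ℝ) * S * γ ^ e) + lp := add_le_add hGy h0
      _ = Br := by rw [hBr_def]; ring
  -- downward induction on the order of the derivative
  have main : ∀ k : ℕ, ∃ b : ℝ, 0 < b ∧
      ∀ f : ℝ → ℝ, (∀ x, 0 < f x) → Integrable f → (∫ x, f x) = 1 →
        (∀ i < r, Differentiable ℝ (iteratedDeriv i fun x => Real.log (f x))) →
        (∀ x y : ℝ, |y - x| ≤ γ →
          |iteratedDeriv r (fun z => Real.log (f z)) x -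
            iteratedDeriv r (fun z => Real.log (f z)) y| ≤
              (Nat.factorial r : ℝ) * L.eval x * |y - x| ^ e) →
        (∀ j' ≤ r, |iteratedDeriv j' (fun z => Real.log (f z)) 0| ≤ lp) →
        ∀ y : ℝ, |y| ≤ (A : ℝ) * γ →
          |iteratedDeriv (r - k) (fun z => Real.log (f z)) y| ≤ b := by
    intro k
    induction k with
    | zero =>
      refine ⟨Br, hBr0, ?_⟩
      intro f _ _ _ _ hH hl0 y hy
      simpa using key_r f hH hl0 y hy
    | succ k ih =>
      obtain ⟨b, hb, hbnd⟩ := ih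
      by_cases hk : r ≤ k
      · refine ⟨b, hb, ?_⟩
        intro f hf hfi hfint hdiff hH hl0 y hy
        have hek : r - (k + 1) = r - k := by omega
        rw [hek]
        exact hbnd f hf hfi hfint hdiff hH hl0 y hy
      · push_neg at hk
        refine ⟨lp + b * ((A : ℝ) * γ), by positivity, ?_⟩
        intro f hf hfi hfint hdiff hH hl0 y hy
        set j' := r - (k + 1) with hj'_def
        have hj'r : j' < r := by omega
        have hsucc : j' + 1 = r - k := by omega
        have hdiffj : Differentiable ℝ (iteratedDeriv j' fun x => Real.log (f x)) :=
          hdiff j' hj'r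
        have hmvt := (convex_Icc (-((A : ℝ) * γ)) ((A : ℝ) * γ)).norm_image_sub_le_of_norm_deriv_le
          (f := iteratedDeriv j' fun x => Real.log (f x)) (C := b)
          (fun x _ => hdiffj.differentiableAt)
          (fun x hx => by
            rw [Real.norm_eq_abs, ← iteratedDeriv_succ, hsucc]
            exact hbnd f hf hfi hfint hdiff hH hl0 x (abs_le.mpr ⟨hx.1, hx.2⟩))
          (x := 0) (y := y)
          (by rw [Set.mem_Icc]; constructor <;> nlinarith)
          (by rw [Set.mem_Icc, ← abs_le]; exact hy)
        rw [Real.norm_eq_abs, Real.norm_eq_abs, sub_zero] at hmvt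
        have h0 : |iteratedDeriv j' (fun z => Real.log (f z)) 0| ≤ lp := hl0 j' hj'r.le
        have hby : b * |y| ≤ b * ((A : ℝ) * γ) := mul_le_mul_of_nonneg_left hy hb.le
        calc |iteratedDeriv j' (fun z => Real.log (f z)) y|
            = |(iteratedDeriv j' (fun z => Real.log (f z)) y -
                iteratedDeriv j' (fun z => Real.log (f z)) 0) +
                iteratedDeriv j' (fun z => Real.log (f z)) 0| := by ring_nf
          _ ≤ |iteratedDeriv j' (fun z => Real.log (f z)) y -
                iteratedDeriv j' (fun z => Real.log (f z)) 0| +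
              |iteratedDeriv j' (fun z => Real.log (f z)) 0| := abs_add_le _ _
          _ ≤ b * |y| + lp := add_le_add hmvt h0
          _ ≤ lp + b * ((A : ℝ) * γ) := by linarith
  obtain ⟨b, hb, hbnd⟩ := main (r - j)
  have hjj : r - (r - j) = j := by omega
  refine ⟨b, hb, ?_⟩
  intro f hf hfi hfint hdiff hH hl0 y hy
  have hnabs : ((n.natAbs : ℝ)) = |(n : ℝ)| := by rw [Nat.cast_natAbs, Int.cast_abs]
  have hAcast : (A : ℝ) = |(n : ℝ)| + 1 := by
    rw [hA_def]
    push_cast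
    rw [hnabs]
  have hyabs : |y| ≤ (A : ℝ) * γ := by
    obtain ⟨h1, h2⟩ := hy
    rw [abs_le]
    have habs1 : -|(n : ℝ)| ≤ (n : ℝ) := neg_abs_le _
    have habs2 : (n : ℝ) ≤ |(n : ℝ)| := le_abs_self _
    constructor
    · rw [hAcast]; nlinarith
    · rw [hAcast]; nlinarith
  have := hbnd f hf hfi hfint hdiff hH hl0 y hyabs
  rwa [hjj] at this
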